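/- (Bijectivity of the noise-to-shares map.) Let F be a field, α : Fin (l+t) → F injective, and γ : Fin t → F injective with range disjoint from the range of α. Fix data segments s : Fin l → (Fin r → F). For noise segments n : Fin t → (Fin r → F), let x_{s,n} : Fin (l+t) → (Fin r → F) be the segment family whose first l entries are s and last t entries are n. Then the map (Fin t → (Fin r → F)) → (Fin t → (Fin r → F)) sending n to the tuple of encoded shares (f_{x_{s,n}}(γ j))_{j ∈ Fin t} is a bijection. -/

import Mathlib

/-- Lagrange encoding of a segment family `x : Fin N → (Fin r → F)` at point `γ`. -/
noncomputable def enc {F : Type*} [Field F] {N r : ℕ} (α : Fin N → F)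
    (x : Fin N → Fin r → F) (γ : F) : Fin r → F :=
  ∑ o, (∏ o' ∈ Finset.univ.erase o, (γ - α o') / (α o - α o')) • x o

lemma enc_eval {F : Type*} [Field F] {N r : ℕ} (α : Fin N → F)
    (x : Fin N → Fin r → F) (γ0 : F) (k : Fin r) :
    enc α x γ0 k
      = Polynomial.eval γ0 (Lagrange.interpolate Finset.univ α (fun o => x o k)) := by
  simp only [enc, Lagrange.interpolate_apply, Polynomial.eval_finset_sum,
    Finset.sum_apply, Pi.smul_apply, smul_eq_mul, Polynomial.eval_mul, Polynomial.eval_C,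
    Lagrange.basis, Polynomial.eval_prod, Lagrange.basisDivisor, Polynomial.smul_eq_C_mul,
    Polynomial.eval_sub, Polynomial.eval_X]
  refine Finset.sum_congr rfl fun o _ => ?_
  rw [mul_comm]
  congr 1
  refine Finset.prod_congr rfl fun o' _ => ?_
  rw [div_eq_inv_mul]

lemma enc_add {F : Type*} [Field F] {N r : ℕ} (α : Fin N → F)
    (x y : Fin N → Fin r → F) (γ0 : F) :
    enc α (x + y) γ0 = enc α x γ0 + enc α y γ0 := by
  simp [enc, smul_add, Finset.sum_add_distrib]

lemma enc_smul {F : Type*} [Field F] {N r : ℕ} (α : Fin N → F)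
    (c : F) (x : Fin N → Fin r → F) (γ0 : F) :
    enc α (c • x) γ0 = c • enc α x γ0 := by
  unfold enc
  rw [Finset.smul_sum]
  refine Finset.sum_congr rfl fun o _ => ?_
  rw [Pi.smul_apply, smul_comm]

lemma append_add {F : Type*} [Field F] {l t r : ℕ}
    (s : Fin l → Fin r → F) (n : Fin t → Fin r → F) :
    Fin.append s n = Fin.append s (0 : Fin t → Fin r → F) + Fin.append (0 : Fin l → Fin r → F) n := by
  funext o
  induction o using Fin.addCases with
  | left i => simp [Fin.append_left]
  | right i => simp [Fin.append_right]

lemma append_zero_add {F : Type*} [Field F] {l t r : ℕ}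
    (n m : Fin t → Fin r → F) :
    Fin.append (0 : Fin l → Fin r → F) (n + m) = Fin.append (0 : Fin l → Fin r → F) n + Fin.append (0 : Fin l → Fin r → F) m := by
  funext o
  induction o using Fin.addCases with
  | left i => simp [Fin.append_left]
  | right i => simp [Fin.append_right]

lemma append_zero_smul {F : Type*} [Field F] {l t r : ℕ}
    (c : F) (n : Fin t → Fin r → F) :
    Fin.append (0 : Fin l → Fin r → F) (c • n) = c • Fin.append (0 : Fin l → Fin r → F) n := by
  funext o
  induction o using Fin.addCases with
  | left i => simp [Fin.append_left]
  | right i => simp [Fin.append_right]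

/-- Bijectivity of the noise-to-shares map: fixing the data segments `s`, the map sending
the noise segments to the tuple of encoded shares at the `t` collusion points is a bijection. -/
theorem noise_to_shares_bijective
    {F : Type*} [Field F] {l t r : ℕ}
    (hl : 1 ≤ l) (ht : 1 ≤ t) (hr : 1 ≤ r)
    (α : Fin (l + t) → F) (hα : Function.Injective α)
    (γ : Fin t → F) (hγ : Function.Injective γ)
    (hdisj : Disjoint (Set.range γ) (Set.range α))
    (s : Fin l → Fin r → F) :
    Function.Bijective
      (fun (n : Fin t → Fin r → F) (j : Fin t) => enc α (Fin.append s n) (γ j)) := by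
  classical
  -- the linear part
  set L : (Fin t → Fin r → F) →ₗ[F] (Fin t → Fin r → F) :=
    { toFun := fun n j => enc α (Fin.append (0 : Fin l → Fin r → F) n) (γ j)
      map_add' := by
        intro n m
        funext j
        simp only [append_zero_add, enc_add, Pi.add_apply]
      map_smul' := by
        intro c n
        funext j
        simp only [RingHom.id_apply, append_zero_smul, enc_smul, Pi.smul_apply] } with hL
  -- injectivity of L
  have hinj : Function.Injective L := by
    rw [← LinearMap.ker_eq_bot, LinearMap.ker_eq_bot']
    intro n hn
    funext i k
    -- the interpolating polynomial in coordinate k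
    set p : Polynomial F :=
      Lagrange.interpolate Finset.univ α
        (fun o => Fin.append (0 : Fin l → Fin r → F) n o k) with hp
    have hαinj : Set.InjOn α (Finset.univ : Finset (Fin (l + t))) := hα.injOn
    -- p vanishes at the l "data" nodes and at the t points γ j
    have hroots : ∀ z : Fin l ⊕ Fin t,
        p.eval (Sum.elim (fun o => α (Fin.castAdd t o)) γ z) = 0 := by
      rintro (o | j)
      · simp only [Sum.elim_inl]
        rw [hp, Lagrange.eval_interpolate_at_node _ hαinj (Finset.mem_univ _)]
        simp [Fin.append_left]
      · have := congrFun (congrFun hn j) k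
        simp only [hL, LinearMap.coe_mk, AddHom.coe_mk, Pi.zero_apply] at this
        rw [enc_eval] at this
        simpa [hp] using this
    have hβinj : Function.Injective
        (Sum.elim (fun o : Fin l => α (Fin.castAdd t o)) γ) := by
      rintro (a | a) (b | b) h <;> simp only [Sum.elim_inl, Sum.elim_inr] at h
      · exact congrArg Sum.inl (Fin.castAdd_injective l t (hα h))
      · exact ((Set.disjoint_right.mp hdisj ⟨_, h⟩) ⟨b, rfl⟩).elim
      · exact ((Set.disjoint_right.mp hdisj ⟨_, h.symm⟩) ⟨a, rfl⟩).elim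
      · exact congrArg Sum.inr (hγ h)
    have hpz : p = 0 := by
      by_cases h0 : p = 0
      · exact h0
      refine Polynomial.eq_zero_of_natDegree_lt_card_of_eval_eq_zero p hβinj hroots ?_
      have hd : p.degree < (l + t : ℕ) := by
        simpa only [← hp, Finset.card_univ, Fintype.card_fin] using
          Lagrange.degree_interpolate_lt (fun o => Fin.append (0 : Fin l → Fin r → F) n o k) hαinj
      rw [Fintype.card_sum, Fintype.card_fin, Fintype.card_fin]
      exact (Polynomial.natDegree_lt_iff_degree_lt h0).mpr hd
    have := Lagrange.eval_interpolate_at_node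
      (fun o => Fin.append (0 : Fin l → Fin r → F) n o k) hαinj
      (Finset.mem_univ (Fin.natAdd l i))
    rw [← hp, hpz] at this
    simpa [Fin.append_right] using this.symm
  have hbij : Function.Bijective L :=
    ⟨hinj, (LinearMap.injective_iff_surjective).mp hinj⟩
  -- the full map is a constant plus L
  have hdecomp : (fun (n : Fin t → Fin r → F) (j : Fin t) =>
      enc α (Fin.append s n) (γ j))
      = (fun v j => enc α (Fin.append s (0 : Fin t → Fin r → F)) (γ j) + v j) ∘ L := by
    funext n
    funext j
    simp only [Function.comp_apply, hL, LinearMap.coe_mk, AddHom.coe_mk]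
    rw [append_add, enc_add]
  rw [hdecomp]
  refine Function.Bijective.comp ?_ hbij
  exact (Equiv.addLeft (fun j => enc α (Fin.append s (0 : Fin t → Fin r → F)) (γ j))).bijective
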